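/- Let E be a real inner product space and V : E → ℝ differentiable with L̃-Lipschitz gradient (L̃ > 0) and bounded above by V_max. Let δ ≥ 0, let 0 < α ≤ 1/(4L̃), and let (w^t)_{t≥0} be a sequence in E such that w^{t+1} = w^t + α g^t with ‖g^t − ∇V(w^t)‖ ≤ δ for every t. Then for every positive integer T, (1/T) Σ_{t=0}^{T−1} ‖∇V(w^t)‖² ≤ 4(V_max − V(w⁰))/(αT) + 3δ². -/

import Mathlib

open InnerProductSpace intervalIntegral

lemma descent_aux
    {E : Type*} [NormedAddCommGroup E] [InnerProductSpace ℝ E] [CompleteSpace E]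
    (V : E → ℝ) (Ltil : ℝ)
    (hV : Differentiable ℝ V)
    (hLip : ∀ x y, ‖gradient V x - gradient V y‖ ≤ Ltil * ‖x - y‖)
    (x u : E) :
    V x + ⟪gradient V x, u⟫_ℝ - Ltil / 2 * ‖u‖ ^ 2 ≤ V (x + u) := by
  have hgc : Continuous (gradient V) := by
    rcases le_or_gt Ltil 0 with h | h
    · have : ∀ a b : E, gradient V a = gradient V b := by
        intro a b
        have := hLip a b
        have h2 : Ltil * ‖a - b‖ ≤ 0 :=
          mul_nonpos_of_nonpos_of_nonneg h (norm_nonneg _)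
        have : ‖gradient V a - gradient V b‖ ≤ 0 := le_trans this h2
        have := le_antisymm this (norm_nonneg _)
        rwa [norm_eq_zero, sub_eq_zero] at this
      exact continuous_const.congr fun a => this x a
    · exact (LipschitzWith.of_dist_le_mul (K := ⟨Ltil, h.le⟩) fun a b => by
        rw [dist_eq_norm, dist_eq_norm]; exact hLip a b).continuous
  set γ : ℝ → E := fun s => x + s • u with hγ
  have hγc : Continuous γ := by fun_prop
  set h : ℝ → ℝ := fun s => ⟪gradient V (γ s), u⟫_ℝ with hh
  have hhc : Continuous h := (hgc.comp hγc).inner continuous_const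
  have hderiv : ∀ s : ℝ, HasDerivAt (V ∘ γ) (h s) s := by
    intro s
    have h1 : HasDerivAt γ u s := by
      have := ((hasDerivAt_id s).smul_const u).const_add x; rwa [one_smul] at this
    have h2 : HasFDerivAt V (toDual ℝ E (gradient V (γ s))) (γ s) :=
      (hV (γ s)).hasGradientAt.hasFDerivAt
    simpa [hh, toDual_apply_apply] using h2.comp_hasDerivAt s h1
  have hint : V (γ 1) - V (γ 0) = ∫ s in (0:ℝ)..1, h s := by
    rw [intervalIntegral.integral_eq_sub_of_hasDerivAt (fun s _ => hderiv s)
      (hhc.intervalIntegrable 0 1)]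
    rfl
  have hbound : ∀ s ∈ Set.Icc (0:ℝ) 1,
      h 0 - Ltil * ‖u‖ ^ 2 * s ≤ h s := by
    intro s hs
    have h1 : |h s - h 0| ≤ Ltil * ‖u‖ ^ 2 * s := by
      have : h s - h 0 = ⟪gradient V (γ s) - gradient V (γ 0), u⟫_ℝ := by
        rw [inner_sub_left]
      rw [this]
      calc |⟪gradient V (γ s) - gradient V (γ 0), u⟫_ℝ|
          ≤ ‖gradient V (γ s) - gradient V (γ 0)‖ * ‖u‖ := abs_real_inner_le_norm _ _
        _ ≤ Ltil * ‖γ s - γ 0‖ * ‖u‖ := by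
            gcongr; exact hLip _ _
        _ = Ltil * ‖u‖ ^ 2 * s := by
            simp [hγ, norm_smul, abs_of_nonneg hs.1]
            ring
    nlinarith [abs_le.1 h1]
  have hmono : ∫ s in (0:ℝ)..1, (h 0 - Ltil * ‖u‖ ^ 2 * s) ≤ ∫ s in (0:ℝ)..1, h s := by
    apply intervalIntegral.integral_mono_on zero_le_one
    · exact (Continuous.intervalIntegrable (by fun_prop) 0 1)
    · exact hhc.intervalIntegrable 0 1
    · exact hbound
  have hval : ∫ s in (0:ℝ)..1, (h 0 - Ltil * ‖u‖ ^ 2 * s)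
      = h 0 - Ltil / 2 * ‖u‖ ^ 2 := by
    rw [intervalIntegral.integral_sub ((continuous_const (y := h 0)).intervalIntegrable 0 1)
      ((by fun_prop : Continuous (fun s : ℝ => Ltil * ‖u‖ ^ 2 * s)).intervalIntegrable 0 1),
      intervalIntegral.integral_const, intervalIntegral.integral_const_mul,
      integral_id]
    simp
    ring
  have h0 : h 0 = ⟪gradient V x, u⟫_ℝ := by simp [hh, hγ]
  have hγ1 : γ 1 = x + u := by simp [hγ]
  have hγ0 : γ 0 = x := by simp [hγ]
  rw [hγ1, hγ0] at hint
  nlinarith [hmono, hval.symm ▸ hmono]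


/-- Average stationarity bound for inexact gradient ascent on an `L̃`-smooth
function bounded above: for step size `0 < α ≤ 1/(4L̃)` and bias `δ`,
`(1/T) Σ_{t<T} ‖∇V(w^t)‖² ≤ 4(V_max − V(w⁰))/(αT) + 3δ²`. -/
theorem inexact_gradient_ascent_average_bound
    {E : Type*} [NormedAddCommGroup E] [InnerProductSpace ℝ E] [CompleteSpace E]
    (V : E → ℝ) (Ltil Vmax δ α : ℝ) (hLtil : 0 < Ltil)
    (hV : Differentiable ℝ V)
    (hLip : ∀ x y, ‖gradient V x - gradient V y‖ ≤ Ltil * ‖x - y‖)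
    (hVmax : ∀ w, V w ≤ Vmax)
    (hδ : 0 ≤ δ) (hα0 : 0 < α) (hα : α ≤ 1 / (4 * Ltil))
    (w g : ℕ → E)
    (hupd : ∀ t : ℕ, w (t + 1) = w t + α • g t)
    (hg : ∀ t : ℕ, ‖g t - gradient V (w t)‖ ≤ δ) :
    ∀ T : ℕ, 0 < T →
      (1 / (T : ℝ)) * ∑ t ∈ Finset.range T, ‖gradient V (w t)‖ ^ 2
        ≤ 4 * (Vmax - V (w 0)) / (α * T) + 3 * δ ^ 2 := by
  have hα' : Ltil * α ≤ 1 / 4 := by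
    have h1 : α * (4 * Ltil) ≤ 1 := by
      have := (le_div_iff₀ (by positivity : (0:ℝ) < 4 * Ltil)).mp hα
      linarith
    nlinarith
  have step : ∀ t : ℕ, α * (‖gradient V (w t)‖ ^ 2 / 4 - 3 * δ ^ 2 / 4)
      ≤ V (w (t + 1)) - V (w t) := by
    intro t
    have hd := descent_aux V Ltil hV hLip (w t) (α • g t)
    rw [← hupd t] at hd
    have hip : ⟪gradient V (w t), α • g t⟫_ℝ = α * ⟪gradient V (w t), g t⟫_ℝ :=
      real_inner_smul_right _ _ _
    have hnorm : ‖α • g t‖ ^ 2 = α ^ 2 * ‖g t‖ ^ 2 := by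
      rw [norm_smul, mul_pow, Real.norm_eq_abs, sq_abs]
    set a := ‖gradient V (w t)‖ with ha
    set b := ‖g t‖ with hb
    have h1 : a ^ 2 - a * δ ≤ ⟪gradient V (w t), g t⟫_ℝ := by
      have h2 : ⟪gradient V (w t), g t - gradient V (w t)⟫_ℝ
          = ⟪gradient V (w t), g t⟫_ℝ - a ^ 2 := by
        rw [inner_sub_right, real_inner_self_eq_norm_sq]
      have h3 := abs_real_inner_le_norm (gradient V (w t)) (g t - gradient V (w t))
      have h4 : ‖gradient V (w t)‖ * ‖g t - gradient V (w t)‖ ≤ a * δ :=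
        mul_le_mul_of_nonneg_left (hg t) (norm_nonneg _)
      have := abs_le.1 (h3.trans h4)
      linarith
    have h5 : b ≤ a + δ := by
      calc b = ‖gradient V (w t) + (g t - gradient V (w t))‖ := by
            rw [hb]; congr 1; abel
        _ ≤ a + ‖g t - gradient V (w t)‖ := norm_add_le _ _
        _ ≤ a + δ := by linarith [hg t]
    have ha0 : 0 ≤ a := norm_nonneg _
    have hb0 : 0 ≤ b := norm_nonneg _
    rw [hip, hnorm] at hd
    nlinarith [sq_nonneg (a - δ), sq_nonneg (a + δ), mul_pos hα0 hα0,
      mul_le_mul_of_nonneg_right hα' (mul_nonneg hα0.le (sq_nonneg b)),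
      mul_le_mul_of_nonneg_left h1 hα0.le,
      mul_le_mul_of_nonneg_left (mul_le_mul h5 h5 hb0 (by linarith)) (mul_nonneg hα0.le hα0.le)]
  intro T hT
  have hTR : (0:ℝ) < T := by exact_mod_cast hT
  set S := ∑ t ∈ Finset.range T, ‖gradient V (w t)‖ ^ 2 with hS
  have htel : ∑ t ∈ Finset.range T, (V (w (t + 1)) - V (w t)) = V (w T) - V (w 0) :=
    Finset.sum_range_sub (fun t => V (w t)) T
  have hsum : α * (S / 4) - 3 * α * δ ^ 2 / 4 * T ≤ Vmax - V (w 0) := by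
    have h6 : ∑ t ∈ Finset.range T, α * (‖gradient V (w t)‖ ^ 2 / 4 - 3 * δ ^ 2 / 4)
        ≤ V (w T) - V (w 0) := htel ▸ Finset.sum_le_sum (fun t _ => step t)
    have h7 : ∑ t ∈ Finset.range T, α * (‖gradient V (w t)‖ ^ 2 / 4 - 3 * δ ^ 2 / 4)
        = α * (S / 4) - 3 * α * δ ^ 2 / 4 * T := by
      have hpt : ∀ t : ℕ, α * (‖gradient V (w t)‖ ^ 2 / 4 - 3 * δ ^ 2 / 4)
          = α / 4 * ‖gradient V (w t)‖ ^ 2 - 3 * α * δ ^ 2 / 4 := fun t => by ring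
      rw [Finset.sum_congr rfl (fun t _ => hpt t), Finset.sum_sub_distrib,
        ← Finset.mul_sum, Finset.sum_const, Finset.card_range, nsmul_eq_mul, hS]
      ring
    linarith [hVmax (w T), h7 ▸ h6]
  have hS0 : 0 ≤ S := Finset.sum_nonneg (fun t _ => sq_nonneg _)
  have key : α * S ≤ 4 * (Vmax - V (w 0)) + 3 * δ ^ 2 * (α * T) := by nlinarith [hsum]
  have h4 : (1 / (T:ℝ)) * S = (α * S) / (α * T) := by
    field_simp
  have h5 : 4 * (Vmax - V (w 0)) / (α * T) + 3 * δ ^ 2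
      = (4 * (Vmax - V (w 0)) + 3 * δ ^ 2 * (α * T)) / (α * T) := by
    field_simp
  rw [h4, h5]
  exact div_le_div_of_nonneg_right key (by positivity)
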